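/- With the Arnoux–Yoccoz interval exchange IE of genus g ≥ 2: for every s ∈ [0, α), if IE(s) ≥ α then IE(IE(s)) < α. Consequently the first return map of IE to the interval [0, α) is given by IE(s) when IE(s) < α and by IE(IE(s)) otherwise. -/

import Mathlib

/-- The partial sum `α + α² + ⋯ + α^k`.  The interval `J_k` of the Arnoux–Yoccoz
partition of `[0,1)` is `[aySum α (k-1), aySum α k)`. -/
noncomputable def aySum (α : ℝ) (k : ℕ) : ℝ := ∑ j ∈ Finset.Icc 1 k, α ^ j

/-- The index `k ≥ 1` such that `t` lies in `J_k = [aySum α (k-1), aySum α k)`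
(the least `k` with `t < aySum α k`). -/
noncomputable def ayIdx (α : ℝ) (t : ℝ) : ℕ := sInf {k : ℕ | t < aySum α k}

/-- The first involution `I₁`, rotating each interval `J_k` halfway around:
`I₁ t = t + α^k/2` if this value lies in `J_k`, and `t - α^k/2` otherwise,
where `k` is the index with `t ∈ J_k`. -/
noncomputable def ayI1 (α : ℝ) (t : ℝ) : ℝ :=
  if t + α ^ ayIdx α t / 2 ∈ Set.Ico (aySum α (ayIdx α t - 1)) (aySum α (ayIdx α t)) then
    t + α ^ ayIdx α t / 2
  else
    t - α ^ ayIdx α t / 2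

/-- The second involution `I₂ : t ↦ t + 1/2 (mod 1)`, rotating `[0,1)` halfway around. -/
noncomputable def ayI2 (t : ℝ) : ℝ := Int.fract (t + 1 / 2)

/-- The Arnoux–Yoccoz interval exchange transformation `IE = I₂ ∘ I₁` on `[0,1)`. -/
noncomputable def ayIE (α : ℝ) (t : ℝ) : ℝ := ayI2 (ayI1 α t)


/-- The first return time of `s` to the interval `[0, α)` under `IE`. -/
noncomputable def ayReturnTime (α : ℝ) (s : ℝ) : ℕ :=
  sInf {n : ℕ | 0 < n ∧ (ayIE α)^[n] s ∈ Set.Ico (0 : ℝ) α}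

lemma ayIE_nonneg (α t : ℝ) : 0 ≤ ayIE α t := Int.fract_nonneg _

lemma ayIE_lt_one (α t : ℝ) : ayIE α t < 1 := Int.fract_lt_one _

lemma aySum_succ (α : ℝ) (k : ℕ) : aySum α (k + 1) = aySum α k + α ^ (k + 1) := by
  unfold aySum
  rw [← Finset.Ico_add_one_right_eq_Icc, ← Finset.Ico_add_one_right_eq_Icc, Finset.sum_Ico_succ_top (by omega)]

lemma aySum_mono (α : ℝ) (hα0 : 0 < α) {a b : ℕ} (h : a ≤ b) : aySum α a ≤ aySum α b := by
  unfold aySum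
  exact Finset.sum_le_sum_of_subset_of_nonneg (Finset.Icc_subset_Icc_right h)
    (fun i _ _ => le_of_lt (pow_pos hα0 i))

lemma aySum_one (α : ℝ) : aySum α 1 = α := by simp [aySum]

/-- `α > 1/2`. -/
lemma ay_half_lt (g : ℕ) (hg : 2 ≤ g) (α : ℝ) (hα0 : 0 < α) (hα1 : α < 1)
    (hsum : ∑ k ∈ Finset.Icc 1 g, α ^ k = 1) : 1 / 2 < α := by
  have hne : α ≠ 1 := ne_of_lt hα1
  rw [← Finset.Ico_add_one_right_eq_Icc, geom_sum_Ico hne (by omega)] at hsum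
  rw [div_eq_one_iff_eq (sub_ne_zero.2 hne)] at hsum
  have h2 : 0 < α ^ (g + 1) := pow_pos hα0 _
  rw [pow_one] at hsum
  linarith

/-- `I₁` maps `[α, 1)` into `[α, 1)`. -/
lemma ayI1_mem (g : ℕ) (hg : 2 ≤ g) (α : ℝ) (hα0 : 0 < α) (hα1 : α < 1)
    (hsum : ∑ k ∈ Finset.Icc 1 g, α ^ k = 1)
    (u : ℝ) (hu : α ≤ u) (hu1 : u < 1) : ayI1 α u ∈ Set.Ico α 1 := by
  have hSg : g ∈ {k : ℕ | u < aySum α k} := by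
    show u < aySum α g
    rw [aySum, hsum]; exact hu1
  set k := ayIdx α u with hk
  have hne : {k : ℕ | u < aySum α k}.Nonempty := ⟨g, hSg⟩
  have hk_mem : u < aySum α k := Nat.sInf_mem hne
  have hkg : k ≤ g := Nat.sInf_le hSg
  have hk2 : 2 ≤ k := by
    by_contra h
    have hk1 : k ≤ 1 := by omega
    have : aySum α k ≤ aySum α 1 := aySum_mono α hα0 hk1
    rw [aySum_one] at this
    linarith
  have hlow : aySum α (k - 1) ≤ u := by
    have hnm : (k - 1) ∉ {k : ℕ | u < aySum α k} :=
      Nat.notMem_of_lt_sInf (by change k - 1 < ayIdx α u; rw [← hk]; omega)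
    exact le_of_not_gt hnm
  have hsucc : aySum α k = aySum α (k - 1) + α ^ k := by
    have hkk : k - 1 + 1 = k := by omega
    calc aySum α k = aySum α (k - 1 + 1) := by rw [hkk]
    _ = aySum α (k - 1) + α ^ (k - 1 + 1) := aySum_succ α _
    _ = aySum α (k - 1) + α ^ k := by rw [hkk]
  have hhalf : 0 < α ^ k / 2 := by positivity
  have hc1 : α ≤ aySum α (k - 1) := by
    have := aySum_mono α hα0 (show 1 ≤ k - 1 by omega)
    rw [aySum_one] at this; exact this
  have hcg : aySum α k ≤ 1 := by
    have hg1 : aySum α g = 1 := by rw [aySum]; exact hsum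
    have := aySum_mono α hα0 hkg
    linarith
  rw [ayI1, ← hk]
  split_ifs with h
  · exact ⟨le_trans hc1 h.1, lt_of_lt_of_le h.2 hcg⟩
  · have hfail : aySum α k ≤ u + α ^ k / 2 := by
      by_contra hcon
      exact h ⟨by linarith, lt_of_not_ge hcon⟩
    constructor
    · have : aySum α (k - 1) ≤ u - α ^ k / 2 := by
        rw [hsucc] at hfail; linarith
      linarith
    · linarith

/-- For `u ∈ [α, 1)`, `IE(u) < α`. -/
lemma ayIE_of_mem (g : ℕ) (hg : 2 ≤ g) (α : ℝ) (hα0 : 0 < α) (hα1 : α < 1)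
    (hsum : ∑ k ∈ Finset.Icc 1 g, α ^ k = 1)
    (u : ℝ) (hu : α ≤ u) (hu1 : u < 1) : ayIE α u < α := by
  have hα2 : 1 / 2 < α := ay_half_lt g hg α hα0 hα1 hsum
  obtain ⟨hv1, hv2⟩ := ayI1_mem g hg α hα0 hα1 hsum u hu hu1
  set v := ayI1 α u with hv
  have : ayIE α u = v - 1 / 2 := by
    rw [ayIE, ayI2, ← hv]
    have heq : v + 1 / 2 = (v - 1 / 2) + 1 := by ring
    rw [heq, Int.fract_add_one, Int.fract_eq_self.2 ⟨by linarith, by linarith⟩]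
  rw [this]
  linarith

/-- For `s ∈ [0, α)`, if `IE(s) ≥ α` then `IE(IE(s)) < α`.  Consequently the first
return map of `IE` to `[0, α)` is given by `IE(s)` when `IE(s) < α` and by
`IE(IE(s))` otherwise. -/
theorem ayIE_firstReturn (g : ℕ) (hg : 2 ≤ g) (α : ℝ) (hα0 : 0 < α) (hα1 : α < 1)
    (hsum : ∑ k ∈ Finset.Icc 1 g, α ^ k = 1)
    (s : ℝ) (hs : s ∈ Set.Ico (0 : ℝ) α) :
    (α ≤ ayIE α s → ayIE α (ayIE α s) < α) ∧
    (ayIE α)^[ayReturnTime α s] s =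
      (if ayIE α s < α then ayIE α s else ayIE α (ayIE α s)) := by
  have key : ∀ u : ℝ, α ≤ u → u < 1 → ayIE α u < α :=
    fun u hu hu1 => ayIE_of_mem g hg α hα0 hα1 hsum u hu hu1
  have hit2 : (ayIE α)^[2] s = ayIE α (ayIE α s) := by
    rw [show (2 : ℕ) = 1 + 1 from rfl, Function.iterate_add_apply, Function.iterate_one]
  refine ⟨fun h => key _ h (ayIE_lt_one α _), ?_⟩
  by_cases hlt : ayIE α s < α
  · have h1 : 1 ∈ {n : ℕ | 0 < n ∧ (ayIE α)^[n] s ∈ Set.Ico (0 : ℝ) α} := by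
      refine ⟨one_pos, ?_⟩
      rw [Function.iterate_one]
      exact ⟨ayIE_nonneg α s, hlt⟩
    have hrt : ayReturnTime α s = 1 := by
      refine le_antisymm (Nat.sInf_le h1) ?_
      exact (Nat.sInf_mem ⟨1, h1⟩).1
    rw [hrt, Function.iterate_one, if_pos hlt]
  · have hge : α ≤ ayIE α s := le_of_not_gt hlt
    have h2 : 2 ∈ {n : ℕ | 0 < n ∧ (ayIE α)^[n] s ∈ Set.Ico (0 : ℝ) α} := by
      refine ⟨two_pos, ?_⟩
      rw [hit2]
      exact ⟨ayIE_nonneg α _, key _ hge (ayIE_lt_one α _)⟩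
    have hrt : ayReturnTime α s = 2 := by
      refine le_antisymm (Nat.sInf_le h2) ?_
      refine le_csInf ⟨2, h2⟩ (fun m hm => ?_)
      obtain ⟨hm0, hm1⟩ := hm
      by_contra hm2
      have : m = 1 := by omega
      subst this
      rw [Function.iterate_one] at hm1
      exact hlt hm1.2
    rw [hrt, hit2, if_neg hlt]
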